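/- Suppose the monotone-density assumption holds, the loss ℓ is (C,α)-Hölder, and the trigger η satisfies ‖η‖₂² ≥ 4 ηᵀ(m₁−m₀). Then for every measurable f : ℝ^p → [0,1], the backdoor risk satisfies ℓ^bd(f) ≤ ρ^{-1} ℓ^poi(f) + ρ^{−α} C ( max_{i=0,1} h_i^η(‖η‖₂/4) )^α. -/

import Mathlib

open MeasureTheory Real
open scoped RealInnerProductSpace

noncomputable section

/-- The clean input density `μ^cl_X(x) = λ ν₁(x) + (1-λ) ν₀(x)`. -/
def muCl {p : ℕ} (lam : ℝ) (ν : Fin 2 → EuclideanSpace ℝ (Fin p) → ℝ)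
    (x : EuclideanSpace ℝ (Fin p)) : ℝ :=
  lam * ν 1 x + (1 - lam) * ν 0 x

/-- The backdoor input density `μ^bd_X(x) = λ ν₁(x-η) + (1-λ) ν₀(x-η)`. -/
def muBd {p : ℕ} (lam : ℝ) (ν : Fin 2 → EuclideanSpace ℝ (Fin p) → ℝ)
    (η x : EuclideanSpace ℝ (Fin p)) : ℝ :=
  lam * ν 1 (x - η) + (1 - lam) * ν 0 (x - η)

/-- The poisoned input density `μ^poi_X = (1-ρ) μ^cl_X + ρ μ^bd_X`. -/
def muPoi {p : ℕ} (lam ρ : ℝ) (ν : Fin 2 → EuclideanSpace ℝ (Fin p) → ℝ)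
    (η x : EuclideanSpace ℝ (Fin p)) : ℝ :=
  (1 - ρ) * muCl lam ν x + ρ * muBd lam ν η x

/-- The clean regression function `f^cl_*(x) = λ ν₁(x) / μ^cl_X(x)`. -/
def fCl {p : ℕ} (lam : ℝ) (ν : Fin 2 → EuclideanSpace ℝ (Fin p) → ℝ)
    (x : EuclideanSpace ℝ (Fin p)) : ℝ :=
  lam * ν 1 x / muCl lam ν x

/-- The poisoned regression function `f^poi_*(x) = (1-ρ) λ ν₁(x) / μ^poi_X(x)`. -/
def fPoi {p : ℕ} (lam ρ : ℝ) (ν : Fin 2 → EuclideanSpace ℝ (Fin p) → ℝ)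
    (η x : EuclideanSpace ℝ (Fin p)) : ℝ :=
  (1 - ρ) * lam * ν 1 x / muPoi lam ρ ν η x

/-- The tail function `h_i^η(r) = ∫_{x : |(x-m)ᵀη| ≥ r ‖η‖₂} ν(x) dx`. -/
def tailProb {p : ℕ} (ν : EuclideanSpace ℝ (Fin p) → ℝ) (m η : EuclideanSpace ℝ (Fin p))
    (r : ℝ) : ℝ :=
  ∫ x in {x : EuclideanSpace ℝ (Fin p) | r * ‖η‖ ≤ |⟪x - m, η⟫|}, ν x

/-- A Lebesgue probability density on `ℝ^p`. -/
def IsProbDensity {p : ℕ} (ν : EuclideanSpace ℝ (Fin p) → ℝ) : Prop :=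
  Measurable ν ∧ (∀ x, 0 ≤ ν x) ∧ Integrable ν ∧ (∫ x, ν x) = 1

/-- `m` is the mean of the probability density `ν`. -/
def HasCondMean {p : ℕ} (ν : EuclideanSpace ℝ (Fin p) → ℝ)
    (m : EuclideanSpace ℝ (Fin p)) : Prop :=
  (∫ x, ν x • x) = m

/-- Monotone-density assumption: the density decreases along any ray from its mean. -/
def MonotoneDensity {p : ℕ} (ν : EuclideanSpace ℝ (Fin p) → ℝ)
    (m : EuclideanSpace ℝ (Fin p)) : Prop :=
  ∀ (η : EuclideanSpace ℝ (Fin p)) (c1 c2 : ℝ), 0 < c1 → c1 < c2 →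
    ν (m - c2 • η) ≤ ν (m - c1 • η)

/-- The loss `ℓ` is `(C,α)`-Hölder on `[0,1]²`. -/
def IsHolderLoss (ℓ : ℝ → ℝ → ℝ) (C α : ℝ) : Prop :=
  ∀ x ∈ Set.Icc (0:ℝ) 1, ∀ y ∈ Set.Icc (0:ℝ) 1, ∀ z ∈ Set.Icc (0:ℝ) 1,
    |ℓ x y - ℓ x z| ≤ C * |y - z| ^ α ∧ |ℓ x y - ℓ z y| ≤ C * |x - z| ^ α

private lemma clamp_mem' (t : ℝ) : max 0 (min t 1) ∈ Set.Icc (0:ℝ) 1 :=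
  ⟨le_max_left _ _, max_le (by norm_num) (min_le_right _ _)⟩

private lemma clamp_eq' {t : ℝ} (ht : t ∈ Set.Icc (0:ℝ) 1) : max 0 (min t 1) = t := by
  rw [min_eq_left ht.2, max_eq_right ht.1]

private lemma clamp_lip' (a b : ℝ) : |max 0 (min a 1) - max 0 (min b 1)| ≤ |a - b| := by
  have h1 : |max 0 (min a 1) - max 0 (min b 1)| ≤ |min a 1 - min b 1| := by
    rw [max_comm 0 (min a 1), max_comm 0 (min b 1)]
    exact abs_max_sub_max_le_abs _ _ _
  exact h1.trans ((abs_min_sub_min_le_max a 1 b 1).trans (by simp))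

private lemma holder_clamp_cont' {ℓ : ℝ → ℝ → ℝ} {C α : ℝ} (hC : 0 ≤ C) (hα0 : 0 < α)
    (hℓ : IsHolderLoss ℓ C α) :
    Continuous fun q : ℝ × ℝ => ℓ (max 0 (min q.1 1)) (max 0 (min q.2 1)) := by
  set L : ℝ × ℝ → ℝ := fun q => ℓ (max 0 (min q.1 1)) (max 0 (min q.2 1)) with hL
  have key : ∀ q q' : ℝ × ℝ, |L q - L q'| ≤ C * |q.1 - q'.1| ^ α + C * |q.2 - q'.2| ^ α := by
    intro q q'
    set a := max 0 (min q.1 1) with ha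
    set b := max 0 (min q.2 1) with hb
    set a' := max 0 (min q'.1 1) with ha'
    set b' := max 0 (min q'.2 1) with hb'
    have h1 : |ℓ a b - ℓ a b'| ≤ C * |b - b'| ^ α :=
      (hℓ a (clamp_mem' _) b (clamp_mem' _) b' (clamp_mem' _)).1
    have h2 : |ℓ a b' - ℓ a' b'| ≤ C * |a - a'| ^ α :=
      (hℓ a (clamp_mem' _) b' (clamp_mem' _) a' (clamp_mem' _)).2
    have h3 : C * |b - b'| ^ α ≤ C * |q.2 - q'.2| ^ α :=
      mul_le_mul_of_nonneg_left
        (Real.rpow_le_rpow (abs_nonneg _) (clamp_lip' _ _) hα0.le) hC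
    have h4 : C * |a - a'| ^ α ≤ C * |q.1 - q'.1| ^ α :=
      mul_le_mul_of_nonneg_left
        (Real.rpow_le_rpow (abs_nonneg _) (clamp_lip' _ _) hα0.le) hC
    calc |L q - L q'| = |(ℓ a b - ℓ a b') + (ℓ a b' - ℓ a' b')| := by
          show |ℓ a b - ℓ a' b'| = _; ring_nf
      _ ≤ |ℓ a b - ℓ a b'| + |ℓ a b' - ℓ a' b'| := abs_add_le _ _
      _ ≤ C * |q.2 - q'.2| ^ α + C * |q.1 - q'.1| ^ α := by linarith
      _ = _ := by ring
  rw [continuous_iff_continuousAt]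
  intro q'
  have hrc : Continuous fun t : ℝ => t ^ α := Real.continuous_rpow_const hα0.le
  have hBcont : Continuous fun q : ℝ × ℝ =>
      C * |q.1 - q'.1| ^ α + C * |q.2 - q'.2| ^ α := by
    exact ((continuous_const.mul (hrc.comp
        ((continuous_fst.sub continuous_const).abs))).add
      (continuous_const.mul (hrc.comp ((continuous_snd.sub continuous_const).abs))))
  have hB0 : (C * |q'.1 - q'.1| ^ α + C * |q'.2 - q'.2| ^ α) = 0 := by
    simp [Real.zero_rpow hα0.ne']
  have hBtend : Filter.Tendsto (fun q : ℝ × ℝ =>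
      C * |q.1 - q'.1| ^ α + C * |q.2 - q'.2| ^ α) (nhds q') (nhds 0) := by
    have := hBcont.tendsto q'
    rwa [hB0] at this
  have hdist : Filter.Tendsto (fun q => dist (L q) (L q')) (nhds q') (nhds 0) :=
    squeeze_zero (fun q => dist_nonneg)
      (fun q => by rw [Real.dist_eq]; exact key q q') hBtend
  exact tendsto_iff_dist_tendsto_zero.mpr hdist

private lemma holder_meas' {X : Type*} [MeasurableSpace X] {ℓ : ℝ → ℝ → ℝ} {C α : ℝ}
    (hC : 0 ≤ C) (hα0 : 0 < α) (hℓ : IsHolderLoss ℓ C α)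
    {f g : X → ℝ} (hf : Measurable f) (hg : Measurable g)
    (hf01 : ∀ x, f x ∈ Set.Icc (0:ℝ) 1) (hg01 : ∀ x, g x ∈ Set.Icc (0:ℝ) 1) :
    Measurable fun x => ℓ (f x) (g x) := by
  have h : (fun x => ℓ (f x) (g x)) =
      (fun q : ℝ × ℝ => ℓ (max 0 (min q.1 1)) (max 0 (min q.2 1))) ∘ fun x => (f x, g x) := by
    funext x
    simp only [Function.comp_apply, clamp_eq' (hf01 x), clamp_eq' (hg01 x)]
  rw [h]
  exact (holder_clamp_cont' hC hα0 hℓ).measurable.comp (hf.prodMk hg)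

private lemma holder_bdd' {ℓ : ℝ → ℝ → ℝ} {C α : ℝ} (hC : 0 ≤ C) (hα0 : 0 < α)
    (hℓ : IsHolderLoss ℓ C α) {x y : ℝ} (hx : x ∈ Set.Icc (0:ℝ) 1)
    (hy : y ∈ Set.Icc (0:ℝ) 1) : |ℓ x y| ≤ |ℓ 0 0| + 2 * C := by
  have h0 : (0:ℝ) ∈ Set.Icc (0:ℝ) 1 := by norm_num
  have h1 : |ℓ x y - ℓ x 0| ≤ C * |y - 0| ^ α := (hℓ x hx y hy 0 h0).1
  have h2 : |ℓ x 0 - ℓ 0 0| ≤ C * |x - 0| ^ α := (hℓ x hx 0 h0 0 h0).2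
  have hyb : C * |y - 0| ^ α ≤ C * 1 := by
    refine mul_le_mul_of_nonneg_left ?_ hC
    exact Real.rpow_le_one (abs_nonneg _) (by rw [sub_zero, abs_of_nonneg hy.1]; exact hy.2)
      hα0.le
  have hxb : C * |x - 0| ^ α ≤ C * 1 := by
    refine mul_le_mul_of_nonneg_left ?_ hC
    exact Real.rpow_le_one (abs_nonneg _) (by rw [sub_zero, abs_of_nonneg hx.1]; exact hx.2)
      hα0.le
  calc |ℓ x y| = |(ℓ x y - ℓ x 0) + (ℓ x 0 - ℓ 0 0) + ℓ 0 0| := by ring_nf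
    _ ≤ |(ℓ x y - ℓ x 0) + (ℓ x 0 - ℓ 0 0)| + |ℓ 0 0| := abs_add_le _ _
    _ ≤ |ℓ x y - ℓ x 0| + |ℓ x 0 - ℓ 0 0| + |ℓ 0 0| := by
        linarith [abs_add_le (ℓ x y - ℓ x 0) (ℓ x 0 - ℓ 0 0)]
    _ ≤ |ℓ 0 0| + 2 * C := by linarith

private lemma jensen_rpow' {X : Type*} [MeasurableSpace X] {μ : Measure X}
    {w g : X → ℝ} {α : ℝ} (hα0 : 0 < α) (hα1 : α ≤ 1)
    (hw_meas : Measurable w) (hw_nn : ∀ x, 0 ≤ w x) (hw_int : Integrable w μ)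
    (hw_one : (∫ x, w x ∂μ) = 1) (hg_meas : Measurable g)
    (hg01 : ∀ x, g x ∈ Set.Icc (0:ℝ) 1) :
    (∫ x, g x ^ α * w x ∂μ) ≤ (∫ x, g x * w x ∂μ) ^ α := by
  have hgw_int : Integrable (fun x => g x * w x) μ := by
    refine hw_int.mono' ((hg_meas.mul hw_meas).aestronglyMeasurable)
      (Filter.Eventually.of_forall fun x => ?_)
    rw [Real.norm_eq_abs, abs_mul, abs_of_nonneg (hg01 x).1, abs_of_nonneg (hw_nn x)]
    exact mul_le_of_le_one_left (hw_nn x) (hg01 x).2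
  have hgαw_int : Integrable (fun x => g x ^ α * w x) μ := by
    refine hw_int.mono' (((Real.continuous_rpow_const hα0.le).measurable.comp
      hg_meas).mul hw_meas).aestronglyMeasurable (Filter.Eventually.of_forall fun x => ?_)
    rw [Real.norm_eq_abs, abs_mul,
      abs_of_nonneg (Real.rpow_nonneg (hg01 x).1 α), abs_of_nonneg (hw_nn x)]
    exact mul_le_of_le_one_left (hw_nn x) (Real.rpow_le_one (hg01 x).1 (hg01 x).2 hα0.le)
  set a := ∫ x, g x * w x ∂μ with ha_def
  have ha0 : 0 ≤ a := integral_nonneg fun x => mul_nonneg (hg01 x).1 (hw_nn x)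
  rcases ha0.eq_or_lt with h | ha
  · have hzero : (fun x => g x * w x) =ᵐ[μ] 0 :=
      (integral_eq_zero_iff_of_nonneg (fun x => mul_nonneg (hg01 x).1 (hw_nn x)) hgw_int).mp
        h.symm
    have hzero' : (fun x => g x ^ α * w x) =ᵐ[μ] 0 := by
      filter_upwards [hzero] with x hx
      rcases mul_eq_zero.mp hx with h' | h'
      · simp [h', Real.zero_rpow hα0.ne']
      · simp [h']
    rw [← h, Real.zero_rpow hα0.ne', integral_congr_ae hzero']
    simp
  · set c2 := α * a ^ (α - 1) with hc2
    set c1 := a ^ α - c2 * a with hc1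
    have key : ∀ x, g x ^ α * w x ≤ c1 * w x + c2 * (g x * w x) := by
      intro x
      have ht : 0 ≤ g x := (hg01 x).1
      have hs : -1 ≤ g x / a - 1 := by
        have := div_nonneg ht ha.le; linarith
      have hB := rpow_one_add_le_one_add_mul_self hs hα0.le hα1
      rw [show (1 : ℝ) + (g x / a - 1) = g x / a by ring] at hB
      have hdiv : (g x / a) ^ α = g x ^ α / a ^ α := Real.div_rpow ht ha.le α
      have haαpos : 0 < a ^ α := Real.rpow_pos_of_pos ha α
      have hmain : g x ^ α ≤ c1 + c2 * g x := by
        have hmul := mul_le_mul_of_nonneg_right hB haαpos.le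
        rw [hdiv, div_mul_cancel₀ _ haαpos.ne'] at hmul
        have hrw : (1 + α * (g x / a - 1)) * a ^ α = c1 + c2 * g x := by
          rw [hc1, hc2]
          have h1 : a ^ (α - 1) = a ^ α / a := by
            rw [Real.rpow_sub ha, Real.rpow_one]
          rw [h1]
          field_simp
          ring
        rwa [hrw] at hmul
      calc g x ^ α * w x ≤ (c1 + c2 * g x) * w x :=
            mul_le_mul_of_nonneg_right hmain (hw_nn x)
        _ = c1 * w x + c2 * (g x * w x) := by ring
    have hint : (∫ x, (c1 * w x + c2 * (g x * w x)) ∂μ) = c1 + c2 * a := by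
      rw [integral_add (hw_int.const_mul c1) (hgw_int.const_mul c2),
        integral_const_mul, integral_const_mul, hw_one, ← ha_def, mul_one]
    have hle : (∫ x, g x ^ α * w x ∂μ) ≤ c1 + c2 * a := by
      rw [← hint]
      exact integral_mono hgαw_int ((hw_int.const_mul c1).add (hgw_int.const_mul c2)) key
    refine hle.trans (le_of_eq ?_)
    rw [hc1, hc2]
    ring

private lemma translate_le' {p : ℕ} {ν : EuclideanSpace ℝ (Fin p) → ℝ}
    (hnn : ∀ x, 0 ≤ ν x) (hint : Integrable ν) {η : EuclideanSpace ℝ (Fin p)}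
    {B S : Set (EuclideanSpace ℝ (Fin p))} (hB : MeasurableSet B) (hS : MeasurableSet S)
    (hsub : {y | y + η ∈ B} ⊆ S) :
    (∫ x in B, ν (x - η)) ≤ ∫ x in S, ν x := by
  have hpre : MeasurableSet {y : EuclideanSpace ℝ (Fin p) | y + η ∈ B} :=
    (measurable_add_const η) hB
  have e1 : (∫ x in B, ν (x - η)) = ∫ y, ({y | y + η ∈ B}).indicator ν y := by
    rw [← integral_indicator hB]
    rw [← integral_add_right_eq_self (fun x => B.indicator (fun x => ν (x - η)) x) η]
    congr 1
    funext y
    by_cases hy : y + η ∈ B <;>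
      simp [Set.indicator, hy, add_sub_cancel_right]
  rw [e1, ← integral_indicator hS]
  exact integral_mono (hint.indicator hpre) (hint.indicator hS)
    (Set.indicator_le_indicator_of_subset hsub hnn)


/-- Theorem 1, backdoor-risk upper bound: under the monotone-density
assumption, a `(C,α)`-Hölder loss and `‖η‖₂² ≥ 4 ηᵀ(m₁-m₀)`, for every measurable
`f : ℝ^p → [0,1]`,
`ℓ^bd(f) ≤ ρ⁻¹ ℓ^poi(f) + ρ^{-α} C (max_{i} h_i^η(‖η‖₂/4))^α`
(recall that the backdoor regression function is `f^bd_* ≡ 0`). -/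
theorem backdoor_risk_upper_bound {p : ℕ} (hp : 1 ≤ p)
    (ν : Fin 2 → EuclideanSpace ℝ (Fin p) → ℝ) (m : Fin 2 → EuclideanSpace ℝ (Fin p))
    (lam ρ : ℝ) (hlam : lam ∈ Set.Ioo (0:ℝ) 1) (hρ : ρ ∈ Set.Ioo (0:ℝ) 1)
    (hν : ∀ i, IsProbDensity (ν i)) (hm : ∀ i, HasCondMean (ν i) (m i))
    (hmono : ∀ i, MonotoneDensity (ν i) (m i))
    (ℓ : ℝ → ℝ → ℝ) (C α : ℝ) (hC : 0 < C) (hα : α ∈ Set.Ioc (0:ℝ) 1)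
    (hℓ : IsHolderLoss ℓ C α)
    (hℓnn : ∀ x ∈ Set.Icc (0:ℝ) 1, ∀ y ∈ Set.Icc (0:ℝ) 1, 0 ≤ ℓ x y)
    (η : EuclideanSpace ℝ (Fin p)) (hη : 4 * ⟪η, m 1 - m 0⟫ ≤ ‖η‖ ^ 2)
    (f : EuclideanSpace ℝ (Fin p) → ℝ) (hfmeas : Measurable f)
    (hf01 : ∀ x, f x ∈ Set.Icc (0:ℝ) 1) :
    (∫ x, ℓ (f x) 0 * muBd lam ν η x) ≤
      ρ⁻¹ * (∫ x, ℓ (f x) (fPoi lam ρ ν η x) * muPoi lam ρ ν η x)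
        + ρ ^ (-α) * C *
          (max (tailProb (ν 0) (m 0) η (‖η‖ / 4))
               (tailProb (ν 1) (m 1) η (‖η‖ / 4))) ^ α := by

  obtain ⟨hl0, hl1⟩ := hlam
  obtain ⟨hρ0, hρ1⟩ := hρ
  obtain ⟨hα0, hα1⟩ := hα
  have hνm : ∀ i, Measurable (ν i) := fun i => (hν i).1
  have hνnn : ∀ i x, 0 ≤ ν i x := fun i => (hν i).2.1
  have hνint : ∀ i, Integrable (ν i) := fun i => (hν i).2.2.1
  have hνone : ∀ i, (∫ x, ν i x) = 1 := fun i => (hν i).2.2.2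
  have htm : ∀ i, Measurable fun x : EuclideanSpace ℝ (Fin p) => ν i (x - η) :=
    fun i => (hνm i).comp (measurable_sub_const η)
  have htint : ∀ i, Integrable fun x : EuclideanSpace ℝ (Fin p) => ν i (x - η) :=
    fun i => (hνint i).comp_sub_right η
  have htone : ∀ i, (∫ x, ν i (x - η)) = 1 := fun i => by
    rw [integral_sub_right_eq_self (ν i) η]; exact hνone i
  -- basic facts about the densities
  have hw_nn : ∀ x, 0 ≤ muBd lam ν η x := fun x =>
    add_nonneg (mul_nonneg hl0.le (hνnn 1 _)) (mul_nonneg (by linarith) (hνnn 0 _))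
  have hw_meas : Measurable (muBd lam ν η) :=
    ((htm 1).const_mul lam).add ((htm 0).const_mul (1 - lam))
  have hw_int : Integrable (muBd lam ν η) :=
    ((htint 1).const_mul lam).add ((htint 0).const_mul (1 - lam))
  have hw_one : (∫ x, muBd lam ν η x) = 1 := by
    show (∫ x, (lam * ν 1 (x - η) + (1 - lam) * ν 0 (x - η))) = 1
    rw [integral_add ((htint 1).const_mul lam) ((htint 0).const_mul (1 - lam)),
      integral_const_mul, integral_const_mul, htone 1, htone 0]
    ring
  have hcl_nn : ∀ x, 0 ≤ muCl lam ν x := fun x =>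
    add_nonneg (mul_nonneg hl0.le (hνnn 1 _)) (mul_nonneg (by linarith) (hνnn 0 _))
  have hcl_meas : Measurable (muCl lam ν) :=
    ((hνm 1).const_mul lam).add ((hνm 0).const_mul (1 - lam))
  have hcl_int : Integrable (muCl lam ν) :=
    ((hνint 1).const_mul lam).add ((hνint 0).const_mul (1 - lam))
  have hu_nn : ∀ x, 0 ≤ muPoi lam ρ ν η x := fun x =>
    add_nonneg (mul_nonneg (by linarith) (hcl_nn x)) (mul_nonneg hρ0.le (hw_nn x))
  have hu_meas : Measurable (muPoi lam ρ ν η) :=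
    (hcl_meas.const_mul (1 - ρ)).add (hw_meas.const_mul ρ)
  have hu_int : Integrable (muPoi lam ρ ν η) :=
    (hcl_int.const_mul (1 - ρ)).add (hw_int.const_mul ρ)
  have hg_meas : Measurable (fPoi lam ρ ν η) :=
    ((hνm 1).const_mul ((1 - ρ) * lam)).div hu_meas
  have hnum_nn : ∀ x, 0 ≤ (1 - ρ) * lam * ν 1 x := fun x =>
    mul_nonneg (mul_nonneg (by linarith) hl0.le) (hνnn 1 x)
  have hnum_le : ∀ x, (1 - ρ) * lam * ν 1 x ≤ muPoi lam ρ ν η x := by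
    intro x
    have h1 : 0 ≤ (1 - lam) * ν 0 x := mul_nonneg (by linarith) (hνnn 0 x)
    have h2 : 0 ≤ ρ * muBd lam ν η x := mul_nonneg hρ0.le (hw_nn x)
    have h3 : 0 ≤ (1 - ρ) * ((1 - lam) * ν 0 x) := mul_nonneg (by linarith) h1
    show (1 - ρ) * lam * ν 1 x ≤
      (1 - ρ) * (lam * ν 1 x + (1 - lam) * ν 0 x) + ρ * muBd lam ν η x
    nlinarith
  have hg01 : ∀ x, fPoi lam ρ ν η x ∈ Set.Icc (0:ℝ) 1 := by
    intro x
    constructor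
    · exact div_nonneg (hnum_nn x) (hu_nn x)
    · exact div_le_one_of_le₀ (hnum_le x) (hu_nn x)
  have hρwu : ∀ x, ρ * muBd lam ν η x ≤ muPoi lam ρ ν η x := by
    intro x
    have h1 : 0 ≤ (1 - ρ) * muCl lam ν x := mul_nonneg (by linarith) (hcl_nn x)
    show ρ * muBd lam ν η x ≤ (1 - ρ) * muCl lam ν x + ρ * muBd lam ν η x
    linarith
  have hwu : ∀ x, muBd lam ν η x ≤ ρ⁻¹ * muPoi lam ρ ν η x := by
    intro x
    have h1 := hρwu x
    calc muBd lam ν η x = ρ⁻¹ * (ρ * muBd lam ν η x) := by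
          field_simp
      _ ≤ ρ⁻¹ * muPoi lam ρ ν η x :=
          mul_le_mul_of_nonneg_left h1 (inv_nonneg.mpr hρ0.le)
  -- loss bounds and measurability
  have h0mem : (0:ℝ) ∈ Set.Icc (0:ℝ) 1 := by norm_num
  have hm0 : Measurable fun x => ℓ (f x) 0 :=
    holder_meas' hC.le hα0 hℓ hfmeas measurable_const hf01 fun _ => h0mem
  have hmg : Measurable fun x => ℓ (f x) (fPoi lam ρ ν η x) :=
    holder_meas' hC.le hα0 hℓ hfmeas hg_meas hf01 hg01
  have hMb0 : ∀ x, |ℓ (f x) 0| ≤ |ℓ 0 0| + 2 * C := fun x =>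
    holder_bdd' hC.le hα0 hℓ (hf01 x) h0mem
  have hMbg : ∀ x, |ℓ (f x) (fPoi lam ρ ν η x)| ≤ |ℓ 0 0| + 2 * C := fun x =>
    holder_bdd' hC.le hα0 hℓ (hf01 x) (hg01 x)
  -- integrability
  have prod_int : ∀ φ w' : EuclideanSpace ℝ (Fin p) → ℝ, Measurable φ →
      (∀ x, |φ x| ≤ |ℓ 0 0| + 2 * C) → Measurable w' → (∀ x, 0 ≤ w' x) → Integrable w' →
      Integrable fun x => φ x * w' x := by
    intro φ w' hφ hφb hw' hw'nn hw'int
    refine (hw'int.const_mul (|ℓ 0 0| + 2 * C)).mono'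
      ((hφ.mul hw').aestronglyMeasurable) (Filter.Eventually.of_forall fun x => ?_)
    rw [Real.norm_eq_abs, abs_mul, abs_of_nonneg (hw'nn x)]
    exact mul_le_mul_of_nonneg_right (hφb x) (hw'nn x)
  have I1 : Integrable fun x => ℓ (f x) 0 * muBd lam ν η x :=
    prod_int _ _ hm0 hMb0 hw_meas hw_nn hw_int
  have I2 : Integrable fun x => ℓ (f x) (fPoi lam ρ ν η x) * muBd lam ν η x :=
    prod_int _ _ hmg hMbg hw_meas hw_nn hw_int
  have I3 : Integrable fun x => ℓ (f x) (fPoi lam ρ ν η x) * muPoi lam ρ ν η x :=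
    prod_int _ _ hmg hMbg hu_meas hu_nn hu_int
  have I5 : Integrable fun x => fPoi lam ρ ν η x * muBd lam ν η x := by
    refine hw_int.mono' ((hg_meas.mul hw_meas).aestronglyMeasurable)
      (Filter.Eventually.of_forall fun x => ?_)
    rw [Real.norm_eq_abs, abs_mul, abs_of_nonneg (hg01 x).1, abs_of_nonneg (hw_nn x)]
    exact mul_le_of_le_one_left (hw_nn x) (hg01 x).2
  have I4 : Integrable fun x => fPoi lam ρ ν η x ^ α * muBd lam ν η x := by
    refine hw_int.mono' (((Real.continuous_rpow_const hα0.le).measurable.comp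
      hg_meas).mul hw_meas).aestronglyMeasurable (Filter.Eventually.of_forall fun x => ?_)
    rw [Real.norm_eq_abs, abs_mul,
      abs_of_nonneg (Real.rpow_nonneg (hg01 x).1 α), abs_of_nonneg (hw_nn x)]
    exact mul_le_of_le_one_left (hw_nn x)
      (Real.rpow_le_one (hg01 x).1 (hg01 x).2 hα0.le)
  -- step 1: Hölder pointwise
  have pt1 : ∀ x, ℓ (f x) 0 * muBd lam ν η x ≤
      ℓ (f x) (fPoi lam ρ ν η x) * muBd lam ν η x
        + C * (fPoi lam ρ ν η x ^ α * muBd lam ν η x) := by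
    intro x
    have h1 := (hℓ (f x) (hf01 x) 0 h0mem (fPoi lam ρ ν η x) (hg01 x)).1
    have h2 : |(0:ℝ) - fPoi lam ρ ν η x| = fPoi lam ρ ν η x := by
      rw [zero_sub, abs_neg, abs_of_nonneg (hg01 x).1]
    rw [h2] at h1
    have h3 : ℓ (f x) 0 ≤ ℓ (f x) (fPoi lam ρ ν η x) + C * fPoi lam ρ ν η x ^ α := by
      have := (abs_le.mp h1).2; linarith
    calc ℓ (f x) 0 * muBd lam ν η x
        ≤ (ℓ (f x) (fPoi lam ρ ν η x) + C * fPoi lam ρ ν η x ^ α) * muBd lam ν η x :=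
          mul_le_mul_of_nonneg_right h3 (hw_nn x)
      _ = ℓ (f x) (fPoi lam ρ ν η x) * muBd lam ν η x
            + C * (fPoi lam ρ ν η x ^ α * muBd lam ν η x) := by ring
  have step1 : (∫ x, ℓ (f x) 0 * muBd lam ν η x) ≤
      (∫ x, ℓ (f x) (fPoi lam ρ ν η x) * muBd lam ν η x)
        + C * ∫ x, fPoi lam ρ ν η x ^ α * muBd lam ν η x := by
    calc (∫ x, ℓ (f x) 0 * muBd lam ν η x)
        ≤ ∫ x, (ℓ (f x) (fPoi lam ρ ν η x) * muBd lam ν η x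
            + C * (fPoi lam ρ ν η x ^ α * muBd lam ν η x)) :=
          integral_mono I1 (I2.add (I4.const_mul C)) pt1
      _ = _ := by rw [integral_add I2 (I4.const_mul C), integral_const_mul]
  -- step 3: change of measure
  have step3 : (∫ x, ℓ (f x) (fPoi lam ρ ν η x) * muBd lam ν η x) ≤
      ρ⁻¹ * ∫ x, ℓ (f x) (fPoi lam ρ ν η x) * muPoi lam ρ ν η x := by
    rw [← integral_const_mul]
    refine integral_mono I2 (I3.const_mul ρ⁻¹) fun x => ?_
    have hl := hℓnn (f x) (hf01 x) (fPoi lam ρ ν η x) (hg01 x)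
    calc ℓ (f x) (fPoi lam ρ ν η x) * muBd lam ν η x
        ≤ ℓ (f x) (fPoi lam ρ ν η x) * (ρ⁻¹ * muPoi lam ρ ν η x) :=
          mul_le_mul_of_nonneg_left (hwu x) hl
      _ = ρ⁻¹ * (ℓ (f x) (fPoi lam ρ ν η x) * muPoi lam ρ ν η x) := by ring
  -- tail sets
  set S0 : Set (EuclideanSpace ℝ (Fin p)) :=
    {x | ‖η‖ / 4 * ‖η‖ ≤ |⟪x - m 0, η⟫|} with hS0def
  set S1 : Set (EuclideanSpace ℝ (Fin p)) :=
    {x | ‖η‖ / 4 * ‖η‖ ≤ |⟪x - m 1, η⟫|} with hS1def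
  have hS0m : MeasurableSet S0 :=
    measurableSet_le measurable_const
      (((continuous_id.sub continuous_const).inner continuous_const).abs.measurable)
  have hS1m : MeasurableSet S1 :=
    measurableSet_le measurable_const
      (((continuous_id.sub continuous_const).inner continuous_const).abs.measurable)
  have hT0 : tailProb (ν 0) (m 0) η (‖η‖ / 4) = ∫ x in S0, ν 0 x := rfl
  have hT1 : tailProb (ν 1) (m 1) η (‖η‖ / 4) = ∫ x in S1, ν 1 x := rfl
  have hT0nn : 0 ≤ tailProb (ν 0) (m 0) η (‖η‖ / 4) := by
    rw [hT0]; exact setIntegral_nonneg hS0m fun x _ => hνnn 0 x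
  have hT1nn : 0 ≤ tailProb (ν 1) (m 1) η (‖η‖ / 4) := by
    rw [hT1]; exact setIntegral_nonneg hS1m fun x _ => hνnn 1 x
  set H := max (tailProb (ν 0) (m 0) η (‖η‖ / 4)) (tailProb (ν 1) (m 1) η (‖η‖ / 4))
    with hHdef
  have hHnn : 0 ≤ H := hT0nn.trans (le_max_left _ _)
  have h0H : tailProb (ν 0) (m 0) η (‖η‖ / 4) ≤ H := le_max_left _ _
  have h1H : tailProb (ν 1) (m 1) η (‖η‖ / 4) ≤ H := le_max_right _ _
  -- separating halfspace
  set A : Set (EuclideanSpace ℝ (Fin p)) := {x | ‖η‖ ^ 2 / 4 ≤ ⟪x - m 1, η⟫} with hAdef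
  have hAm : MeasurableSet A :=
    measurableSet_le measurable_const
      (((continuous_id.sub continuous_const).inner continuous_const).measurable)
  have hnorm : ‖η‖ / 4 * ‖η‖ = ‖η‖ ^ 2 / 4 := by rw [sq]; ring
  have hexp : ∀ mm y : EuclideanSpace ℝ (Fin p),
      ⟪y + η - m 1, η⟫ = ⟪y - mm, η⟫ + ⟪mm - m 1, η⟫ + ‖η‖ ^ 2 := by
    intro mm y
    rw [← real_inner_self_eq_norm_sq]
    simp only [inner_sub_left, inner_add_left]
    ring
  have hsub1 : {y : EuclideanSpace ℝ (Fin p) | y + η ∈ Aᶜ} ⊆ S1 := by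
    intro y hy
    have hy' : ⟪y + η - m 1, η⟫ < ‖η‖ ^ 2 / 4 := by
      have := hy
      simp only [Set.mem_setOf_eq, Set.mem_compl_iff, hAdef, not_le] at this
      exact this
    show ‖η‖ / 4 * ‖η‖ ≤ |⟪y - m 1, η⟫|
    have he := hexp (m 1) y
    have hz : ⟪m 1 - m 1, η⟫ = (0:ℝ) := by simp
    have habs := neg_le_abs ⟪y - m 1, η⟫
    have hn2 : (0:ℝ) ≤ ‖η‖ ^ 2 := sq_nonneg _
    linarith
  have hsub0 : {y : EuclideanSpace ℝ (Fin p) | y + η ∈ Aᶜ} ⊆ S0 := by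
    intro y hy
    have hy' : ⟪y + η - m 1, η⟫ < ‖η‖ ^ 2 / 4 := by
      have := hy
      simp only [Set.mem_setOf_eq, Set.mem_compl_iff, hAdef, not_le] at this
      exact this
    show ‖η‖ / 4 * ‖η‖ ≤ |⟪y - m 0, η⟫|
    have he := hexp (m 0) y
    have hc : ⟪m 0 - m 1, η⟫ = -⟪η, m 1 - m 0⟫ := by
      rw [show m 0 - m 1 = -(m 1 - m 0) from (neg_sub (m 1) (m 0)).symm,
        inner_neg_left, real_inner_comm]
    have habs := neg_le_abs ⟪y - m 0, η⟫
    have hn2 : (0:ℝ) ≤ ‖η‖ ^ 2 := sq_nonneg _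
    linarith
  have hsubA : A ⊆ S1 := by
    intro x hx
    have hx' : ‖η‖ ^ 2 / 4 ≤ ⟪x - m 1, η⟫ := hx
    have := le_abs_self ⟪x - m 1, η⟫
    show ‖η‖ / 4 * ‖η‖ ≤ |⟪x - m 1, η⟫|
    linarith
  -- tail bound on Aᶜ
  have ht1 : (∫ x in Aᶜ, ν 1 (x - η)) ≤ tailProb (ν 1) (m 1) η (‖η‖ / 4) := by
    rw [hT1]
    exact translate_le' (hνnn 1) (hνint 1) hAm.compl hS1m hsub1
  have ht0 : (∫ x in Aᶜ, ν 0 (x - η)) ≤ tailProb (ν 0) (m 0) η (‖η‖ / 4) := by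
    rw [hT0]
    exact translate_le' (hνnn 0) (hνint 0) hAm.compl hS0m hsub0
  have hAc : (∫ x in Aᶜ, fPoi lam ρ ν η x * muBd lam ν η x) ≤ H := by
    have b1 : (∫ x in Aᶜ, fPoi lam ρ ν η x * muBd lam ν η x) ≤
        ∫ x in Aᶜ, muBd lam ν η x :=
      setIntegral_mono I5.integrableOn hw_int.integrableOn fun x =>
        mul_le_of_le_one_left (hw_nn x) (hg01 x).2
    have b2 : (∫ x in Aᶜ, muBd lam ν η x) =
        lam * (∫ x in Aᶜ, ν 1 (x - η)) + (1 - lam) * ∫ x in Aᶜ, ν 0 (x - η) := by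
      show (∫ x in Aᶜ, (lam * ν 1 (x - η) + (1 - lam) * ν 0 (x - η))) = _
      rw [integral_add ((htint 1).const_mul lam).integrableOn
        ((htint 0).const_mul (1 - lam)).integrableOn, integral_const_mul, integral_const_mul]
    have b3 : lam * (∫ x in Aᶜ, ν 1 (x - η)) ≤ lam * H :=
      mul_le_mul_of_nonneg_left (ht1.trans h1H) hl0.le
    have b4 : (1 - lam) * (∫ x in Aᶜ, ν 0 (x - η)) ≤ (1 - lam) * H :=
      mul_le_mul_of_nonneg_left (ht0.trans h0H) (by linarith)
    have b5 : lam * H + (1 - lam) * H = H := by ring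
    linarith
  -- bound on A
  have hptA : ∀ x, fPoi lam ρ ν η x * muBd lam ν η x ≤
      ρ⁻¹ * ((1 - ρ) * lam) * ν 1 x := by
    intro x
    have hg_nn := (hg01 x).1
    have h1 : fPoi lam ρ ν η x * muBd lam ν η x ≤
        fPoi lam ρ ν η x * (ρ⁻¹ * muPoi lam ρ ν η x) :=
      mul_le_mul_of_nonneg_left (hwu x) hg_nn
    have h3 : fPoi lam ρ ν η x * muPoi lam ρ ν η x ≤ (1 - ρ) * lam * ν 1 x := by
      show (1 - ρ) * lam * ν 1 x / muPoi lam ρ ν η x * muPoi lam ρ ν η x ≤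
        (1 - ρ) * lam * ν 1 x
      rcases (hu_nn x).eq_or_lt with h | h
      · rw [← h]
        simpa using hnum_nn x
      · rw [div_mul_cancel₀ _ h.ne']
    calc fPoi lam ρ ν η x * muBd lam ν η x
        ≤ fPoi lam ρ ν η x * (ρ⁻¹ * muPoi lam ρ ν η x) := h1
      _ = ρ⁻¹ * (fPoi lam ρ ν η x * muPoi lam ρ ν η x) := by ring
      _ ≤ ρ⁻¹ * ((1 - ρ) * lam * ν 1 x) :=
          mul_le_mul_of_nonneg_left h3 (inv_nonneg.mpr hρ0.le)
      _ = ρ⁻¹ * ((1 - ρ) * lam) * ν 1 x := by ring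
  have hcoef_nn : 0 ≤ ρ⁻¹ * ((1 - ρ) * lam) :=
    mul_nonneg (inv_nonneg.mpr hρ0.le) (mul_nonneg (by linarith) hl0.le)
  have hAbound : (∫ x in A, fPoi lam ρ ν η x * muBd lam ν η x) ≤
      ρ⁻¹ * ((1 - ρ) * lam) * H := by
    calc (∫ x in A, fPoi lam ρ ν η x * muBd lam ν η x)
        ≤ ∫ x in A, ρ⁻¹ * ((1 - ρ) * lam) * ν 1 x :=
          setIntegral_mono I5.integrableOn
            ((hνint 1).const_mul (ρ⁻¹ * ((1 - ρ) * lam))).integrableOn hptA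
      _ = ρ⁻¹ * ((1 - ρ) * lam) * ∫ x in A, ν 1 x := integral_const_mul _ _
      _ ≤ ρ⁻¹ * ((1 - ρ) * lam) * H := by
          refine mul_le_mul_of_nonneg_left ?_ hcoef_nn
          calc (∫ x in A, ν 1 x) ≤ ∫ x in S1, ν 1 x :=
                setIntegral_mono_set (hνint 1).integrableOn
                  (Filter.Eventually.of_forall (hνnn 1))
                  (HasSubset.Subset.eventuallyLE hsubA)
            _ = tailProb (ν 1) (m 1) η (‖η‖ / 4) := hT1.symm
            _ ≤ H := h1H
  -- key bound
  have hkey : (∫ x, fPoi lam ρ ν η x * muBd lam ν η x) ≤ ρ⁻¹ * H := by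
    have hsplit : (∫ x, fPoi lam ρ ν η x * muBd lam ν η x) =
        (∫ x in A, fPoi lam ρ ν η x * muBd lam ν η x)
          + ∫ x in Aᶜ, fPoi lam ρ ν η x * muBd lam ν η x :=
      (integral_add_compl hAm I5).symm
    have hc1 : ρ⁻¹ * ((1 - ρ) * lam) ≤ ρ⁻¹ * (1 - ρ) := by
      have : (1 - ρ) * lam ≤ (1 - ρ) * 1 :=
        mul_le_mul_of_nonneg_left hl1.le (by linarith)
      have h2 := mul_le_mul_of_nonneg_left this (inv_nonneg.mpr hρ0.le)
      calc ρ⁻¹ * ((1 - ρ) * lam) ≤ ρ⁻¹ * ((1 - ρ) * 1) := h2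
        _ = ρ⁻¹ * (1 - ρ) := by ring
    have hc2 : ρ⁻¹ * ((1 - ρ) * lam) * H ≤ ρ⁻¹ * (1 - ρ) * H :=
      mul_le_mul_of_nonneg_right hc1 hHnn
    have hid : ρ⁻¹ * (1 - ρ) * H + H = ρ⁻¹ * H := by
      field_simp
      ring
    linarith
  -- Jensen
  have hjen : (∫ x, fPoi lam ρ ν η x ^ α * muBd lam ν η x) ≤
      (∫ x, fPoi lam ρ ν η x * muBd lam ν η x) ^ α :=
    jensen_rpow' hα0 hα1 hw_meas hw_nn hw_int hw_one hg_meas hg01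
  have hgw_nn : 0 ≤ ∫ x, fPoi lam ρ ν η x * muBd lam ν η x :=
    integral_nonneg fun x => mul_nonneg (hg01 x).1 (hw_nn x)
  have hstep6 : (∫ x, fPoi lam ρ ν η x * muBd lam ν η x) ^ α ≤ (ρ⁻¹ * H) ^ α :=
    Real.rpow_le_rpow hgw_nn hkey hα0.le
  have hstep7 : (ρ⁻¹ * H) ^ α = ρ ^ (-α) * H ^ α := by
    rw [Real.mul_rpow (inv_nonneg.mpr hρ0.le) hHnn, Real.inv_rpow hρ0.le,
      ← Real.rpow_neg hρ0.le]
  have h6 : C * (∫ x, fPoi lam ρ ν η x ^ α * muBd lam ν η x) ≤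
      C * (ρ ^ (-α) * H ^ α) := by
    refine mul_le_mul_of_nonneg_left ?_ hC.le
    calc (∫ x, fPoi lam ρ ν η x ^ α * muBd lam ν η x)
        ≤ (∫ x, fPoi lam ρ ν η x * muBd lam ν η x) ^ α := hjen
      _ ≤ (ρ⁻¹ * H) ^ α := hstep6
      _ = ρ ^ (-α) * H ^ α := hstep7
  calc (∫ x, ℓ (f x) 0 * muBd lam ν η x)
      ≤ (∫ x, ℓ (f x) (fPoi lam ρ ν η x) * muBd lam ν η x)
          + C * ∫ x, fPoi lam ρ ν η x ^ α * muBd lam ν η x := step1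
    _ ≤ ρ⁻¹ * (∫ x, ℓ (f x) (fPoi lam ρ ν η x) * muPoi lam ρ ν η x)
          + C * (ρ ^ (-α) * H ^ α) := by linarith
    _ = ρ⁻¹ * (∫ x, ℓ (f x) (fPoi lam ρ ν η x) * muPoi lam ρ ν η x)
          + ρ ^ (-α) * C * H ^ α := by ring


end
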